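/- Let 0 < θ < θ̄, and let p ≥ 1 and q ≥ 0 be integers. Let X₁, …, X_p, Y₁, …, Y_q be jointly independent positive random variables on a probability space such that P[X_i ≥ z] ≍ z^{-θ} as z → ∞ for each i and P[Y_j ≥ z] ≍ z^{-θ̄} as z → ∞ for each j. Then P[X₁ ⋯ X_p · Y₁ ⋯ Y_q ≥ z] ≍ z^{-θ} (log z)^{p-1} as z → ∞. -/

import Mathlib

open MeasureTheory ProbabilityTheory Real
set_option linter.unusedSectionVars false
set_option linter.unusedVariables false
set_option maxHeartbeats 1000000

section helpers
variable {Ω : Type*} [MeasureSpace Ω] [IsProbabilityMeasure (ℙ : Measure Ω)]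

noncomputable def tl (W : Ω → ℝ) (z : ℝ) : ℝ := (ℙ {ω | z ≤ W ω}).toReal

lemma tl_def (W : Ω → ℝ) (z : ℝ) : tl W z = (ℙ {ω | z ≤ W ω}).toReal := rfl

lemma tl_nonneg (W : Ω → ℝ) (z : ℝ) : 0 ≤ tl W z := ENNReal.toReal_nonneg

lemma tl_le_one (W : Ω → ℝ) (z : ℝ) : tl W z ≤ 1 := by
  have := prob_le_one (μ := (ℙ : Measure Ω)) (s := {ω | z ≤ W ω})
  simpa [tl] using ENNReal.toReal_mono (by simp) this

lemma tl_mono (W : Ω → ℝ) {z z' : ℝ} (h : z ≤ z') : tl W z' ≤ tl W z := by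
  apply ENNReal.toReal_mono (measure_ne_top _ _)
  exact measure_mono (fun ω hω => le_trans h hω)

lemma exists_slab {R : ℝ} (hR : 1 < R) {v : ℝ} (h1 : 1 ≤ v) :
    ∀ {K : ℕ}, v < R ^ K → ∃ k, k < K ∧ R ^ k ≤ v ∧ v < R ^ (k + 1) := by
  intro K
  induction K with
  | zero => intro h; simp at h; linarith
  | succ K ih =>
    intro h
    by_cases hv : v < R ^ K
    · obtain ⟨k, hk, h1, h2⟩ := ih hv
      exact ⟨k, Nat.lt_succ_of_lt hk, h1, h2⟩
    · exact ⟨K, Nat.lt_succ_self K, not_lt.1 hv, h⟩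

lemma exists_K {R : ℝ} (hR : 1 < R) {v : ℝ} (h1 : 1 ≤ v) :
    ∃ k : ℕ, R ^ k ≤ v ∧ v < R ^ (k + 1) := by
  obtain ⟨K, hK⟩ := pow_unbounded_of_one_lt v hR
  obtain ⟨k, _, h⟩ := exists_slab hR h1 hK
  exact ⟨k, h⟩

lemma indep_rect {U V : Ω → ℝ} (hind : IndepFun U V ℙ) (a b : ℝ) :
    ℙ ({ω | a ≤ U ω} ∩ {ω | b ≤ V ω}) = ℙ {ω | a ≤ U ω} * ℙ {ω | b ≤ V ω} := by
  have := hind.measure_inter_preimage_eq_mul (Set.Ici a) (Set.Ici b)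
    measurableSet_Ici measurableSet_Ici
  simpa [Set.preimage, Set.Ici] using this

lemma indep_rect_slab {U V : Ω → ℝ} (hind : IndepFun U V ℙ) (a b c : ℝ) :
    ℙ ({ω | a ≤ U ω} ∩ ({ω | b ≤ V ω} \ {ω | c ≤ V ω})) =
      ℙ {ω | a ≤ U ω} * ℙ ({ω | b ≤ V ω} \ {ω | c ≤ V ω}) := by
  have := hind.measure_inter_preimage_eq_mul (Set.Ici a) (Set.Ico b c)
    measurableSet_Ici measurableSet_Ico
  have h2 : V ⁻¹' (Set.Ico b c) = {ω | b ≤ V ω} \ {ω | c ≤ V ω} := by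
    ext ω; simp [Set.Ico, not_le]
  have h1 : U ⁻¹' (Set.Ici a) = {ω | a ≤ U ω} := rfl
  rw [h1, h2] at this
  exact this

lemma upper_decomp {U V : Ω → ℝ} (hU : Measurable U) (hV : Measurable V)
    (hUpos : ∀ᵐ ω ∂(ℙ : Measure Ω), 0 < U ω) (hVpos : ∀ᵐ ω ∂(ℙ : Measure Ω), 0 < V ω)
    (hind : IndepFun U V ℙ) {R : ℝ} (hR : 1 < R) {z : ℝ} (hz : 0 < z) (K : ℕ) :
    tl (fun ω => U ω * V ω) z ≤
      tl U z + tl V (R ^ K) + ∑ k ∈ Finset.range K, tl U (z / R ^ (k + 1)) * tl V (R ^ k) := by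
  have hGnull : ℙ {ω | ¬ (0 < U ω ∧ 0 < V ω)} = 0 := ae_iff.mp (hUpos.and hVpos)
  -- covering
  have hcov : {ω | z ≤ U ω * V ω} ⊆
      (({ω | z ≤ U ω} ∪ {ω | R ^ K ≤ V ω}) ∪
        ⋃ k ∈ Finset.range K, ({ω | z / R ^ (k + 1) ≤ U ω} ∩ {ω | R ^ k ≤ V ω})) ∪
      {ω | ¬ (0 < U ω ∧ 0 < V ω)} := by
    intro ω hω
    by_cases hωG : 0 < U ω ∧ 0 < V ω
    · left
      obtain ⟨hu, hv⟩ := hωG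
      simp only [Set.mem_setOf_eq] at hω
      by_cases h2 : R ^ K ≤ V ω
      · exact Or.inl (Or.inr h2)
      by_cases h3 : V ω < 1
      · refine Or.inl (Or.inl ?_)
        show z ≤ U ω
        nlinarith
      · push_neg at h3 h2
        obtain ⟨k, hk, hk1, hk2⟩ := exists_slab hR h3 h2
        refine Or.inr (Set.mem_iUnion₂.2 ⟨k, Finset.mem_range.2 hk, ?_, hk1⟩)
        show z / R ^ (k + 1) ≤ U ω
        have h4 : z / V ω ≤ U ω := (div_le_iff₀ hv).2 hω
        have h5 : z / R ^ (k + 1) ≤ z / V ω := by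
          apply div_le_div_of_nonneg_left hz.le hv hk2.le
        linarith
    · right; exact hωG
  -- measure bound in ℝ≥0∞
  have hmb : ℙ {ω | z ≤ U ω * V ω} ≤
      ℙ {ω | z ≤ U ω} + ℙ {ω | R ^ K ≤ V ω} +
        ∑ k ∈ Finset.range K, ℙ {ω | z / R ^ (k + 1) ≤ U ω} * ℙ {ω | R ^ k ≤ V ω} := by
    calc ℙ {ω | z ≤ U ω * V ω} ≤ ℙ ((({ω | z ≤ U ω} ∪ {ω | R ^ K ≤ V ω}) ∪
        ⋃ k ∈ Finset.range K, ({ω | z / R ^ (k + 1) ≤ U ω} ∩ {ω | R ^ k ≤ V ω})) ∪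
        {ω | ¬ (0 < U ω ∧ 0 < V ω)}) := measure_mono hcov
    _ ≤ ℙ (({ω | z ≤ U ω} ∪ {ω | R ^ K ≤ V ω}) ∪
        ⋃ k ∈ Finset.range K, ({ω | z / R ^ (k + 1) ≤ U ω} ∩ {ω | R ^ k ≤ V ω})) +
        ℙ {ω | ¬ (0 < U ω ∧ 0 < V ω)} := measure_union_le _ _
    _ = ℙ (({ω | z ≤ U ω} ∪ {ω | R ^ K ≤ V ω}) ∪
        ⋃ k ∈ Finset.range K, ({ω | z / R ^ (k + 1) ≤ U ω} ∩ {ω | R ^ k ≤ V ω})) := by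
        rw [hGnull, add_zero]
    _ ≤ ℙ ({ω | z ≤ U ω} ∪ {ω | R ^ K ≤ V ω}) +
        ℙ (⋃ k ∈ Finset.range K, ({ω | z / R ^ (k + 1) ≤ U ω} ∩ {ω | R ^ k ≤ V ω})) :=
        measure_union_le _ _
    _ ≤ (ℙ {ω | z ≤ U ω} + ℙ {ω | R ^ K ≤ V ω}) +
        ∑ k ∈ Finset.range K, ℙ ({ω | z / R ^ (k + 1) ≤ U ω} ∩ {ω | R ^ k ≤ V ω}) := by
        gcongr
        · exact measure_union_le _ _
        · exact measure_biUnion_finset_le _ _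
    _ = ℙ {ω | z ≤ U ω} + ℙ {ω | R ^ K ≤ V ω} +
        ∑ k ∈ Finset.range K, ℙ {ω | z / R ^ (k + 1) ≤ U ω} * ℙ {ω | R ^ k ≤ V ω} := by
        congr 1
        exact Finset.sum_congr rfl (fun k _ => indep_rect hind _ _)
  -- pass to toReal
  have hfin : ∀ s : Set Ω, ℙ s ≠ ⊤ := fun s => measure_ne_top _ _
  have hRHSfin : ℙ {ω | z ≤ U ω} + ℙ {ω | R ^ K ≤ V ω} +
      ∑ k ∈ Finset.range K, ℙ {ω | z / R ^ (k + 1) ≤ U ω} * ℙ {ω | R ^ k ≤ V ω} ≠ ⊤ := by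
    apply ENNReal.add_ne_top.2
    constructor
    · exact ENNReal.add_ne_top.2 ⟨hfin _, hfin _⟩
    · apply (ENNReal.sum_lt_top.2 ?_).ne
      intro k _
      exact (ENNReal.mul_lt_top (hfin _).lt_top (hfin _).lt_top)
  have := ENNReal.toReal_mono hRHSfin hmb
  rw [ENNReal.toReal_add (ENNReal.add_ne_top.2 ⟨hfin _, hfin _⟩), ENNReal.toReal_add (hfin _) (hfin _),
    ENNReal.toReal_sum] at this
  · simp only [ENNReal.toReal_mul] at this
    exact this
  · intro k _
    exact (ENNReal.mul_lt_top (hfin _).lt_top (hfin _).lt_top).ne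
  · apply (ENNReal.sum_lt_top.2 ?_).ne
    intro k _
    exact (ENNReal.mul_lt_top (hfin _).lt_top (hfin _).lt_top)



/-- one-rectangle lower bound -/
lemma lower_rect {U V : Ω → ℝ} (hind : IndepFun U V ℙ) {z ε : ℝ} (hz : 0 < z) (hε : 0 < ε) :
    tl U (z / ε) * tl V ε ≤ tl (fun ω => U ω * V ω) z := by
  have hsub : {ω | z / ε ≤ U ω} ∩ {ω | ε ≤ V ω} ⊆ {ω | z ≤ U ω * V ω} := by
    rintro ω ⟨h1, h2⟩
    show z ≤ U ω * V ω
    have h0 : 0 ≤ z / ε := le_of_lt (div_pos hz hε)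
    calc z = (z / ε) * ε := by field_simp
    _ ≤ U ω * V ω := mul_le_mul h1 h2 hε.le (le_trans h0 h1)
  have := measure_mono (μ := (ℙ : Measure Ω)) hsub
  rw [indep_rect hind] at this
  have h2 := ENNReal.toReal_mono (measure_ne_top _ _) this
  rw [ENNReal.toReal_mul] at h2
  exact h2

/-- slab sum lower bound -/
lemma lower_decomp {U V : Ω → ℝ} (hU : Measurable U) (hV : Measurable V)
    (hind : IndepFun U V ℙ) {R : ℝ} (hR : 1 < R) {z : ℝ} (hz : 0 < z) (k₁ K : ℕ) :
    ∑ k ∈ Finset.Ico k₁ K, tl U (z / R ^ k) * (tl V (R ^ k) - tl V (R ^ (k + 1))) ≤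
      tl (fun ω => U ω * V ω) z := by
  have hR0 : 0 < R := lt_trans one_pos hR
  set B : ℕ → Set Ω := fun k =>
    {ω | z / R ^ k ≤ U ω} ∩ ({ω | R ^ k ≤ V ω} \ {ω | R ^ (k + 1) ≤ V ω}) with hB
  have hBsub : ∀ k, B k ⊆ {ω | z ≤ U ω * V ω} := by
    rintro k ω ⟨h1, h2, h3⟩
    show z ≤ U ω * V ω
    have hRk : (0:ℝ) < R ^ k := pow_pos hR0 k
    have h0 : 0 ≤ z / R ^ k := le_of_lt (div_pos hz hRk)
    calc z = (z / R ^ k) * R ^ k := by field_simp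
    _ ≤ U ω * V ω := mul_le_mul h1 h2 hRk.le (le_trans h0 h1)
  have hBmeas : ∀ k, MeasurableSet (B k) := by
    intro k
    exact ((hU measurableSet_Ici).inter
      ((hV measurableSet_Ici).diff (hV measurableSet_Ici)))
  have hdisj : (Finset.Ico k₁ K : Set ℕ).PairwiseDisjoint B := by
    intro i hi j hj hij
    apply Set.disjoint_left.2
    rintro ω ⟨_, hi1, hi2⟩ ⟨_, hj1, hj2⟩
    simp only [Set.mem_setOf_eq, not_le] at hi1 hi2 hj1 hj2
    rcases lt_or_gt_of_ne hij with h | h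
    · have : R ^ (i+1) ≤ R ^ j := pow_le_pow_right₀ hR.le h
      linarith
    · have : R ^ (j+1) ≤ R ^ i := pow_le_pow_right₀ hR.le h
      linarith
  have hunion : ℙ (⋃ k ∈ Finset.Ico k₁ K, B k) = ∑ k ∈ Finset.Ico k₁ K, ℙ (B k) :=
    measure_biUnion_finset hdisj (fun k _ => hBmeas k)
  have hle : ∑ k ∈ Finset.Ico k₁ K, ℙ (B k) ≤ ℙ {ω | z ≤ U ω * V ω} := by
    rw [← hunion]
    exact measure_mono (Set.iUnion₂_subset fun k _ => hBsub k)
  have h2 := ENNReal.toReal_mono (measure_ne_top _ _) hle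
  rw [ENNReal.toReal_sum (fun k _ => measure_ne_top _ _)] at h2
  refine le_trans (le_of_eq ?_) h2
  apply Finset.sum_congr rfl
  intro k hk
  rw [hB]
  simp only []
  rw [indep_rect_slab hind, ENNReal.toReal_mul]
  congr 1
  -- (ℙ slab).toReal = tl V (R^k) - tl V (R^(k+1))
  have hsub2 : {ω | R ^ (k+1) ≤ V ω} ⊆ {ω | R ^ k ≤ V ω} := by
    intro ω h
    exact le_trans (pow_le_pow_right₀ hR.le (Nat.le_succ k)) h
  rw [measure_diff hsub2 ((hV measurableSet_Ici).nullMeasurableSet) (measure_ne_top _ _)]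
  rw [ENNReal.toReal_sub_of_le (measure_mono hsub2) (measure_ne_top _ _)]
  rfl

def UTail (W : Ω → ℝ) (θ : ℝ) (a : ℕ) (C : ℝ) : Prop :=
  ∀ z, 1 ≤ z → tl W z ≤ C * z ^ (-θ) * (1 + Real.log z) ^ a

def LTail (W : Ω → ℝ) (θ : ℝ) (a : ℕ) (c z₀ : ℝ) : Prop :=
  ∀ z, z₀ ≤ z → c * z ^ (-θ) * (1 + Real.log z) ^ a ≤ tl W z

lemma upper_step_same {U V : Ω → ℝ} (hU : Measurable U) (hV : Measurable V)
    (hUpos : ∀ᵐ ω ∂(ℙ : Measure Ω), 0 < U ω) (hVpos : ∀ᵐ ω ∂(ℙ : Measure Ω), 0 < V ω)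
    (hind : IndepFun U V ℙ) {θ : ℝ} (hθ : 0 < θ) {a : ℕ} {C_U C_V : ℝ}
    (hCU : 0 < C_U) (hCV : 0 < C_V) (h1 : UTail U θ a C_U)
    (h2 : ∀ z, 1 ≤ z → tl V z ≤ C_V * z ^ (-θ)) :
    UTail (fun ω => U ω * V ω) θ (a + 1)
      (C_U + C_V * 2 ^ θ + C_U * C_V * 2 ^ θ / Real.log 2) := by
  intro z hz
  have hz0 : (0:ℝ) < z := lt_of_lt_of_le one_pos hz
  have hlz : 0 ≤ Real.log z := Real.log_nonneg hz
  have hL : (1:ℝ) ≤ 1 + Real.log z := by linarith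
  have hL0 : (0:ℝ) < 1 + Real.log z := by linarith
  have hP : (0:ℝ) < z ^ (-θ) := rpow_pos_of_pos hz0 _
  have hlog2 : (0:ℝ) < Real.log 2 := Real.log_pos (by norm_num)
  have h2θ : (0:ℝ) < (2:ℝ) ^ θ := rpow_pos_of_pos (by norm_num) _
  obtain ⟨K, hK1, hK2⟩ := exists_K (R := (2:ℝ)) one_lt_two hz
  have hdec := upper_decomp hU hV hUpos hVpos hind (R := (2:ℝ)) one_lt_two hz0 K
  -- term 1
  have hT1 : tl U z ≤ C_U * z ^ (-θ) * (1 + Real.log z) ^ a := h1 z hz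
  -- term 2
  have h2K1 : (1:ℝ) ≤ 2 ^ K := one_le_pow₀ (by norm_num)
  have hT2 : tl V ((2:ℝ) ^ K) ≤ C_V * 2 ^ θ * z ^ (-θ) := by
    have := h2 _ h2K1
    have hhalf : z / 2 ≤ (2:ℝ) ^ K := by
      have : z < 2 * 2 ^ K := by rw [← pow_succ']; exact hK2
      linarith
    have hmono : ((2:ℝ) ^ K) ^ (-θ) ≤ (z / 2) ^ (-θ) :=
      rpow_le_rpow_of_nonpos (by linarith) hhalf (by linarith)
    have heq : (z / 2) ^ (-θ) = z ^ (-θ) * 2 ^ θ := by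
      rw [Real.div_rpow hz0.le (by norm_num), Real.rpow_neg (by norm_num : (0:ℝ) ≤ 2)]
      field_simp
    calc tl V ((2:ℝ) ^ K) ≤ C_V * ((2:ℝ) ^ K) ^ (-θ) := this
    _ ≤ C_V * (z / 2) ^ (-θ) := by nlinarith
    _ = C_V * 2 ^ θ * z ^ (-θ) := by rw [heq]; ring
  -- term 3
  have hT3 : ∑ k ∈ Finset.range K, tl U (z / 2 ^ (k + 1)) * tl V ((2:ℝ) ^ k) ≤
      (K : ℝ) * (C_U * C_V * 2 ^ θ * z ^ (-θ) * (1 + Real.log z) ^ a) := by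
    have hterm : ∀ k ∈ Finset.range K,
        tl U (z / 2 ^ (k + 1)) * tl V ((2:ℝ) ^ k) ≤
          C_U * C_V * 2 ^ θ * z ^ (-θ) * (1 + Real.log z) ^ a := by
      intro k hk
      have hkK : k < K := Finset.mem_range.1 hk
      have hpow : (2:ℝ) ^ (k + 1) ≤ 2 ^ K := pow_le_pow_right₀ (by norm_num) hkK
      have hge1 : (1:ℝ) ≤ z / 2 ^ (k + 1) := by
        rw [le_div_iff₀ (by positivity)]
        calc (1:ℝ) * 2 ^ (k+1) = 2 ^ (k+1) := one_mul _
        _ ≤ 2 ^ K := hpow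
        _ ≤ z := hK1
      have hUb := h1 _ hge1
      have hVb := h2 _ (one_le_pow₀ (by norm_num : (1:ℝ) ≤ 2) (n := k))
      have hzk0 : (0:ℝ) < z / 2 ^ (k+1) := by positivity
      have hlogle : (1 + Real.log (z / 2 ^ (k+1))) ^ a ≤ (1 + Real.log z) ^ a := by
        apply pow_le_pow_left₀
        · have := Real.log_nonneg hge1; linarith
        · have : Real.log (z / 2 ^ (k+1)) ≤ Real.log z :=
            Real.log_le_log hzk0 (by
              rw [div_le_iff₀ (by positivity)]
              nlinarith [one_le_pow₀ (by norm_num : (1:ℝ) ≤ 2) (n := k+1)])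
          linarith
      have hprod : (z / 2 ^ (k+1)) ^ (-θ) * ((2:ℝ) ^ k) ^ (-θ) = 2 ^ θ * z ^ (-θ) := by
        rw [← Real.mul_rpow (by positivity) (by positivity)]
        have : z / 2 ^ (k+1) * 2 ^ k = z / 2 := by
          rw [pow_succ]; field_simp
        rw [this, Real.div_rpow hz0.le (by norm_num), Real.rpow_neg (by norm_num : (0:ℝ) ≤ 2)]
        field_simp
      have hq1 : (0:ℝ) < (z / 2 ^ (k+1)) ^ (-θ) := rpow_pos_of_pos hzk0 _
      have hq2 : (0:ℝ) < ((2:ℝ) ^ k) ^ (-θ) := rpow_pos_of_pos (by positivity) _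
      have hq3 : (0:ℝ) ≤ (1 + Real.log (z / 2 ^ (k+1))) ^ a := by
        apply pow_nonneg; have := Real.log_nonneg hge1; linarith
      calc tl U (z / 2 ^ (k + 1)) * tl V ((2:ℝ) ^ k)
          ≤ (C_U * (z / 2 ^ (k+1)) ^ (-θ) * (1 + Real.log (z / 2 ^ (k+1))) ^ a) *
            (C_V * ((2:ℝ) ^ k) ^ (-θ)) := by
            apply mul_le_mul hUb hVb (tl_nonneg _ _) (by positivity)
      _ = C_U * C_V * ((z / 2 ^ (k+1)) ^ (-θ) * ((2:ℝ) ^ k) ^ (-θ)) *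
            (1 + Real.log (z / 2 ^ (k+1))) ^ a := by ring
      _ = C_U * C_V * (2 ^ θ * z ^ (-θ)) * (1 + Real.log (z / 2 ^ (k+1))) ^ a := by
            rw [hprod]
      _ ≤ C_U * C_V * (2 ^ θ * z ^ (-θ)) * (1 + Real.log z) ^ a := by
            apply mul_le_mul_of_nonneg_left hlogle (by positivity)
      _ = C_U * C_V * 2 ^ θ * z ^ (-θ) * (1 + Real.log z) ^ a := by ring
    calc ∑ k ∈ Finset.range K, tl U (z / 2 ^ (k + 1)) * tl V ((2:ℝ) ^ k)
        ≤ (Finset.range K).card • (C_U * C_V * 2 ^ θ * z ^ (-θ) * (1 + Real.log z) ^ a) :=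
          Finset.sum_le_card_nsmul _ _ _ hterm
    _ = (K : ℝ) * (C_U * C_V * 2 ^ θ * z ^ (-θ) * (1 + Real.log z) ^ a) := by
          rw [Finset.card_range, nsmul_eq_mul]
  -- K bound
  have hKbound : (K : ℝ) ≤ (1 + Real.log z) / Real.log 2 := by
    have : (K : ℝ) * Real.log 2 ≤ Real.log z := by
      have := Real.log_le_log (by positivity) hK1
      rwa [Real.log_pow] at this
    rw [le_div_iff₀ hlog2]
    linarith
  -- combine
  have hfinal := le_trans hdec (by
    have hT3' : ∑ k ∈ Finset.range K, tl U (z / 2 ^ (k + 1)) * tl V ((2:ℝ) ^ k) ≤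
        ((1 + Real.log z) / Real.log 2) * (C_U * C_V * 2 ^ θ * z ^ (-θ) * (1 + Real.log z) ^ a) := by
      refine le_trans hT3 (mul_le_mul_of_nonneg_right hKbound (by positivity))
    exact add_le_add (add_le_add hT1 hT2) hT3')
  calc tl (fun ω => U ω * V ω) z ≤ _ := hfinal
  _ ≤ (C_U + C_V * 2 ^ θ + C_U * C_V * 2 ^ θ / Real.log 2) * z ^ (-θ) *
      (1 + Real.log z) ^ (a + 1) := by
    have e1 : C_U * z ^ (-θ) * (1 + Real.log z) ^ a ≤ C_U * z ^ (-θ) * (1 + Real.log z) ^ (a+1) := by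
      apply mul_le_mul_of_nonneg_left _ (by positivity)
      exact pow_le_pow_right₀ hL (Nat.le_succ a)
    have e2 : C_V * 2 ^ θ * z ^ (-θ) ≤ C_V * 2 ^ θ * z ^ (-θ) * (1 + Real.log z) ^ (a+1) := by
      nlinarith [one_le_pow₀ hL (n := a+1), mul_pos (mul_pos hCV h2θ) hP]
    have e3 : ((1 + Real.log z) / Real.log 2) * (C_U * C_V * 2 ^ θ * z ^ (-θ) * (1 + Real.log z) ^ a)
        = (C_U * C_V * 2 ^ θ / Real.log 2) * z ^ (-θ) * (1 + Real.log z) ^ (a+1) := by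
      rw [pow_succ]; field_simp
    rw [add_mul, add_mul, add_mul, add_mul]
    rw [e3] at *
    linarith [e1, e2]
end helpers

section analytic2
variable {Ω : Type*} [MeasureSpace Ω] [IsProbabilityMeasure (ℙ : Measure Ω)]

lemma geo_sum_le {r : ℝ} (h0 : 0 ≤ r) (h1 : r < 1) (K : ℕ) :
    ∑ k ∈ Finset.range K, r ^ k ≤ (1 - r)⁻¹ := by
  have hs : Summable (fun k : ℕ => r ^ k) := summable_geometric_of_lt_one h0 h1
  have := Summable.sum_le_tsum (Finset.range K) (fun i _ => pow_nonneg h0 i) hs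
  rwa [tsum_geometric_of_lt_one h0 h1] at this

lemma upper_step_dom {U V : Ω → ℝ} (hU : Measurable U) (hV : Measurable V)
    (hUpos : ∀ᵐ ω ∂(ℙ : Measure Ω), 0 < U ω) (hVpos : ∀ᵐ ω ∂(ℙ : Measure Ω), 0 < V ω)
    (hind : IndepFun U V ℙ) {θ θ' : ℝ} (hθ : 0 < θ) (hθ' : θ < θ') {a : ℕ} {C_U C_V : ℝ}
    (hCU : 0 < C_U) (hCV : 0 < C_V) (h1 : UTail U θ a C_U)
    (h2 : ∀ z, 1 ≤ z → tl V z ≤ C_V * z ^ (-θ')) :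
    UTail (fun ω => U ω * V ω) θ a
      (C_U + C_V * 2 ^ θ + C_U * C_V * 2 ^ θ * (1 - 2 ^ (θ - θ'))⁻¹) := by
  have hr0 : (0:ℝ) < 2 ^ (θ - θ') := rpow_pos_of_pos (by norm_num) _
  have hr1 : (2:ℝ) ^ (θ - θ') < 1 := by
    apply Real.rpow_lt_one_of_one_lt_of_neg (by norm_num) (by linarith)
  intro z hz
  have hz0 : (0:ℝ) < z := lt_of_lt_of_le one_pos hz
  have hlz : 0 ≤ Real.log z := Real.log_nonneg hz
  have hL : (1:ℝ) ≤ 1 + Real.log z := by linarith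
  have hP : (0:ℝ) < z ^ (-θ) := rpow_pos_of_pos hz0 _
  have h2θ : (0:ℝ) < (2:ℝ) ^ θ := rpow_pos_of_pos (by norm_num) _
  obtain ⟨K, hK1, hK2⟩ := exists_K (R := (2:ℝ)) one_lt_two hz
  have hdec := upper_decomp hU hV hUpos hVpos hind (R := (2:ℝ)) one_lt_two hz0 K
  have hT1 : tl U z ≤ C_U * z ^ (-θ) * (1 + Real.log z) ^ a := h1 z hz
  have h2K1 : (1:ℝ) ≤ 2 ^ K := one_le_pow₀ (by norm_num)
  have hT2 : tl V ((2:ℝ) ^ K) ≤ C_V * 2 ^ θ * z ^ (-θ) := by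
    have hVb := h2 _ h2K1
    have hexp : ((2:ℝ) ^ K) ^ (-θ') ≤ ((2:ℝ) ^ K) ^ (-θ) :=
      Real.rpow_le_rpow_of_exponent_le h2K1 (by linarith)
    have hhalf : z / 2 ≤ (2:ℝ) ^ K := by
      have : z < 2 * 2 ^ K := by rw [← pow_succ']; exact hK2
      linarith
    have hmono : ((2:ℝ) ^ K) ^ (-θ) ≤ (z / 2) ^ (-θ) :=
      rpow_le_rpow_of_nonpos (by linarith) hhalf (by linarith)
    have heq : (z / 2) ^ (-θ) = z ^ (-θ) * 2 ^ θ := by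
      rw [Real.div_rpow hz0.le (by norm_num), Real.rpow_neg (by norm_num : (0:ℝ) ≤ 2)]
      field_simp
    calc tl V ((2:ℝ) ^ K) ≤ C_V * ((2:ℝ) ^ K) ^ (-θ') := hVb
    _ ≤ C_V * (z / 2) ^ (-θ) := by nlinarith
    _ = C_V * 2 ^ θ * z ^ (-θ) := by rw [heq]; ring
  have hT3 : ∑ k ∈ Finset.range K, tl U (z / 2 ^ (k + 1)) * tl V ((2:ℝ) ^ k) ≤
      (1 - 2 ^ (θ - θ'))⁻¹ * (C_U * C_V * 2 ^ θ * z ^ (-θ) * (1 + Real.log z) ^ a) := by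
    have hterm : ∀ k ∈ Finset.range K,
        tl U (z / 2 ^ (k + 1)) * tl V ((2:ℝ) ^ k) ≤
          (C_U * C_V * 2 ^ θ * z ^ (-θ) * (1 + Real.log z) ^ a) * (2 ^ (θ - θ')) ^ k := by
      intro k hk
      have hkK : k < K := Finset.mem_range.1 hk
      have hpow : (2:ℝ) ^ (k + 1) ≤ 2 ^ K := pow_le_pow_right₀ (by norm_num) hkK
      have hge1 : (1:ℝ) ≤ z / 2 ^ (k + 1) := by
        rw [le_div_iff₀ (by positivity)]
        calc (1:ℝ) * 2 ^ (k+1) = 2 ^ (k+1) := one_mul _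
        _ ≤ 2 ^ K := hpow
        _ ≤ z := hK1
      have hUb := h1 _ hge1
      have hVb := h2 _ (one_le_pow₀ (by norm_num : (1:ℝ) ≤ 2) (n := k))
      have hzk0 : (0:ℝ) < z / 2 ^ (k+1) := by positivity
      have hlogle : (1 + Real.log (z / 2 ^ (k+1))) ^ a ≤ (1 + Real.log z) ^ a := by
        apply pow_le_pow_left₀
        · have := Real.log_nonneg hge1; linarith
        · have : Real.log (z / 2 ^ (k+1)) ≤ Real.log z :=
            Real.log_le_log hzk0 (by
              rw [div_le_iff₀ (by positivity)]
              nlinarith [one_le_pow₀ (by norm_num : (1:ℝ) ≤ 2) (n := k+1)])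
          linarith
      -- split the θ' exponent
      have hsplit : ((2:ℝ) ^ k) ^ (-θ') = ((2:ℝ) ^ k) ^ (-θ) * (2 ^ (θ - θ')) ^ k := by
        rw [← Real.rpow_natCast ((2:ℝ)) k, ← Real.rpow_mul (by norm_num),
          ← Real.rpow_mul (by norm_num), ← Real.rpow_natCast ((2:ℝ) ^ (θ - θ')) k,
          ← Real.rpow_mul (by norm_num), ← Real.rpow_add (by norm_num : (0:ℝ) < 2)]
        ring_nf
      have hprod : (z / 2 ^ (k+1)) ^ (-θ) * ((2:ℝ) ^ k) ^ (-θ) = 2 ^ θ * z ^ (-θ) := by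
        rw [← Real.mul_rpow (by positivity) (by positivity)]
        have : z / 2 ^ (k+1) * 2 ^ k = z / 2 := by
          rw [pow_succ]; field_simp
        rw [this, Real.div_rpow hz0.le (by norm_num), Real.rpow_neg (by norm_num : (0:ℝ) ≤ 2)]
        field_simp
      have hq3 : (0:ℝ) ≤ (1 + Real.log (z / 2 ^ (k+1))) ^ a := by
        apply pow_nonneg; have := Real.log_nonneg hge1; linarith
      have hrk : (0:ℝ) ≤ ((2:ℝ) ^ (θ - θ')) ^ k := by positivity
      calc tl U (z / 2 ^ (k + 1)) * tl V ((2:ℝ) ^ k)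
          ≤ (C_U * (z / 2 ^ (k+1)) ^ (-θ) * (1 + Real.log (z / 2 ^ (k+1))) ^ a) *
            (C_V * ((2:ℝ) ^ k) ^ (-θ')) := by
            apply mul_le_mul hUb hVb (tl_nonneg _ _) (by positivity)
      _ = C_U * C_V * ((z / 2 ^ (k+1)) ^ (-θ) * ((2:ℝ) ^ k) ^ (-θ)) *
            (1 + Real.log (z / 2 ^ (k+1))) ^ a * (2 ^ (θ - θ')) ^ k := by
            rw [hsplit]; ring
      _ = C_U * C_V * (2 ^ θ * z ^ (-θ)) * (1 + Real.log (z / 2 ^ (k+1))) ^ a *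
            (2 ^ (θ - θ')) ^ k := by rw [hprod]
      _ ≤ C_U * C_V * (2 ^ θ * z ^ (-θ)) * (1 + Real.log z) ^ a * (2 ^ (θ - θ')) ^ k := by
            apply mul_le_mul_of_nonneg_right _ hrk
            apply mul_le_mul_of_nonneg_left hlogle (by positivity)
      _ = (C_U * C_V * 2 ^ θ * z ^ (-θ) * (1 + Real.log z) ^ a) * (2 ^ (θ - θ')) ^ k := by
            ring
    calc ∑ k ∈ Finset.range K, tl U (z / 2 ^ (k + 1)) * tl V ((2:ℝ) ^ k)
        ≤ ∑ k ∈ Finset.range K,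
            (C_U * C_V * 2 ^ θ * z ^ (-θ) * (1 + Real.log z) ^ a) * (2 ^ (θ - θ')) ^ k :=
          Finset.sum_le_sum hterm
    _ = (C_U * C_V * 2 ^ θ * z ^ (-θ) * (1 + Real.log z) ^ a) *
          ∑ k ∈ Finset.range K, ((2:ℝ) ^ (θ - θ')) ^ k := by rw [Finset.mul_sum]
    _ ≤ (C_U * C_V * 2 ^ θ * z ^ (-θ) * (1 + Real.log z) ^ a) * (1 - 2 ^ (θ - θ'))⁻¹ := by
          apply mul_le_mul_of_nonneg_left (geo_sum_le hr0.le hr1 K) (by positivity)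
    _ = (1 - 2 ^ (θ - θ'))⁻¹ * (C_U * C_V * 2 ^ θ * z ^ (-θ) * (1 + Real.log z) ^ a) := by ring
  calc tl (fun ω => U ω * V ω) z ≤ _ := hdec
  _ ≤ C_U * z ^ (-θ) * (1 + Real.log z) ^ a + C_V * 2 ^ θ * z ^ (-θ) +
      (1 - 2 ^ (θ - θ'))⁻¹ * (C_U * C_V * 2 ^ θ * z ^ (-θ) * (1 + Real.log z) ^ a) :=
      add_le_add (add_le_add hT1 hT2) hT3
  _ ≤ (C_U + C_V * 2 ^ θ + C_U * C_V * 2 ^ θ * (1 - 2 ^ (θ - θ'))⁻¹) * z ^ (-θ) *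
      (1 + Real.log z) ^ a := by
    have hLa : (1:ℝ) ≤ (1 + Real.log z) ^ a := one_le_pow₀ hL
    have hinv : (0:ℝ) < (1 - 2 ^ (θ - θ'))⁻¹ := by
      apply inv_pos.2; linarith
    nlinarith [mul_pos (mul_pos hCV h2θ) hP, mul_pos hCU hP]
  end analytic2

section analytic3
variable {Ω : Type*} [MeasureSpace Ω] [IsProbabilityMeasure (ℙ : Measure Ω)]

lemma lower_step_dom {U V : Ω → ℝ} (hind : IndepFun U V ℙ) {θ : ℝ} (hθ : 0 < θ) {a : ℕ}
    {c_U z₀U ε δ : ℝ} (hcU : 0 < c_U) (hz₀U : 1 ≤ z₀U) (hε : 1 ≤ ε) (hδ : 0 < δ)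
    (h1 : LTail U θ a c_U z₀U) (h2 : δ ≤ tl V ε) :
    LTail (fun ω => U ω * V ω) θ a (c_U * δ / 2 ^ a)
      (max (ε * z₀U) (Real.exp (2 * Real.log ε + 1))) := by
  intro z hzge
  have hε0 : (0:ℝ) < ε := lt_of_lt_of_le one_pos hε
  have hz1 : ε * z₀U ≤ z := le_trans (le_max_left _ _) hzge
  have hz2 : Real.exp (2 * Real.log ε + 1) ≤ z := le_trans (le_max_right _ _) hzge
  have hzz : (1:ℝ) ≤ z := by nlinarith
  have hz0 : (0:ℝ) < z := lt_of_lt_of_le one_pos hzz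
  have hlz : 0 ≤ Real.log z := Real.log_nonneg hzz
  have hP : (0:ℝ) < z ^ (-θ) := rpow_pos_of_pos hz0 _
  -- z / ε ≥ z₀U
  have hge : z₀U ≤ z / ε := by
    rw [le_div_iff₀ hε0]; nlinarith
  have hzε0 : (0:ℝ) < z / ε := lt_of_lt_of_le (lt_of_lt_of_le one_pos hz₀U) hge
  have hUb := h1 _ hge
  -- rpow comparison
  have hrle : z ^ (-θ) ≤ (z / ε) ^ (-θ) := by
    apply rpow_le_rpow_of_nonpos hzε0 _ (by linarith)
    apply div_le_self hz0.le hε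
  -- log comparison
  have hlog : (1 + Real.log z) / 2 ≤ 1 + Real.log (z / ε) := by
    rw [Real.log_div (ne_of_gt hz0) (ne_of_gt hε0)]
    have h3 : 2 * Real.log ε + 1 ≤ Real.log z := by
      have := Real.log_le_log (Real.exp_pos _) hz2
      rwa [Real.log_exp] at this
    linarith
  have hlogpow : ((1 + Real.log z) / 2) ^ a ≤ (1 + Real.log (z / ε)) ^ a := by
    apply pow_le_pow_left₀ (by linarith) hlog
  have key := lower_rect hind hz0 hε0
  have hlb : c_U * δ / 2 ^ a * z ^ (-θ) * (1 + Real.log z) ^ a ≤ tl U (z / ε) * tl V ε := by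
    have t1 : c_U * (z / ε) ^ (-θ) * (1 + Real.log (z / ε)) ^ a * δ ≤ tl U (z / ε) * tl V ε := by
      apply mul_le_mul hUb h2 hδ.le (tl_nonneg _ _)
    have t2 : c_U * δ / 2 ^ a * z ^ (-θ) * (1 + Real.log z) ^ a ≤
        c_U * (z / ε) ^ (-θ) * (1 + Real.log (z / ε)) ^ a * δ := by
      have e : c_U * δ / 2 ^ a * z ^ (-θ) * (1 + Real.log z) ^ a =
          c_U * δ * z ^ (-θ) * ((1 + Real.log z) / 2) ^ a := by
        rw [div_pow]; field_simp
      rw [e]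
      calc c_U * δ * z ^ (-θ) * ((1 + Real.log z) / 2) ^ a
          ≤ c_U * δ * z ^ (-θ) * (1 + Real.log (z / ε)) ^ a := by
            apply mul_le_mul_of_nonneg_left hlogpow (by positivity)
      _ ≤ c_U * δ * (z / ε) ^ (-θ) * (1 + Real.log (z / ε)) ^ a := by
            have hnn : (0:ℝ) ≤ (1 + Real.log (z / ε)) ^ a :=
              pow_nonneg (le_trans (by linarith) hlog) a
            apply mul_le_mul_of_nonneg_right _ hnn
            apply mul_le_mul_of_nonneg_left hrle (by positivity)
      _ = c_U * (z / ε) ^ (-θ) * (1 + Real.log (z / ε)) ^ a * δ := by ring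
    linarith
  linarith
end analytic3

section analytic4
variable {Ω : Type*} [MeasureSpace Ω] [IsProbabilityMeasure (ℙ : Measure Ω)]

lemma lower_step_same {U V : Ω → ℝ} (hU : Measurable U) (hV : Measurable V)
    (hind : IndepFun U V ℙ) {θ : ℝ} (hθ : 0 < θ) {a : ℕ}
    {c_U z₀U c_V z₀V C_V : ℝ} (hcU : 0 < c_U) (hz₀U : 1 ≤ z₀U)
    (hcV : 0 < c_V) (hz₀V : 1 ≤ z₀V) (hCV : 0 < C_V)
    (h1 : LTail U θ a c_U z₀U)
    (hVl : ∀ z, z₀V ≤ z → c_V * z ^ (-θ) ≤ tl V z)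
    (hVu : ∀ z, 1 ≤ z → tl V z ≤ C_V * z ^ (-θ)) :
    ∃ c z₁, 0 < c ∧ 1 ≤ z₁ ∧ LTail (fun ω => U ω * V ω) θ (a + 1) c z₁ := by
  set R : ℝ := max 2 (max z₀V ((2 * C_V / c_V) ^ (θ⁻¹))) with hRdef
  have hR2 : (2:ℝ) ≤ R := le_max_left _ _
  have hR : (1:ℝ) < R := lt_of_lt_of_le one_lt_two hR2
  have hR0 : (0:ℝ) < R := lt_trans one_pos hR
  have hRz₀V : z₀V ≤ R := le_trans (le_max_left _ _) (le_max_right _ _)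
  set L : ℝ := Real.log R with hLdef
  have hLpos : 0 < L := Real.log_pos hR
  have hRθ : 2 * C_V / c_V ≤ R ^ θ := by
    have hx0 : (0:ℝ) ≤ 2 * C_V / c_V := by positivity
    have hx : (2 * C_V / c_V) ^ (θ⁻¹) ≤ R := le_trans (le_max_right _ _) (le_max_right _ _)
    calc 2 * C_V / c_V = ((2 * C_V / c_V) ^ (θ⁻¹)) ^ θ := by
          rw [← Real.rpow_mul hx0, inv_mul_cancel₀ hθ.ne', Real.rpow_one]
    _ ≤ R ^ θ := Real.rpow_le_rpow (Real.rpow_nonneg hx0 _) hx hθ.le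
  have hRθ0 : (0:ℝ) < R ^ θ := Real.rpow_pos_of_pos hR0 _
  have hCVR : C_V * R ^ (-θ) ≤ c_V / 2 := by
    have h2 : C_V ≤ c_V / 2 * R ^ θ := by
      have hleft : c_V / 2 * (2 * C_V / c_V) = C_V := by field_simp
      nlinarith
    rw [Real.rpow_neg hR0.le]
    calc C_V * (R ^ θ)⁻¹ ≤ (c_V / 2 * R ^ θ) * (R ^ θ)⁻¹ :=
          mul_le_mul_of_nonneg_right h2 (by positivity)
    _ = c_V / 2 := by field_simp
  -- slab lower bound
  have hslab : ∀ k : ℕ, 1 ≤ k → c_V / 2 * (R ^ k) ^ (-θ) ≤ tl V (R ^ k) - tl V (R ^ (k + 1)) := by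
    intro k hk
    have hRk1 : (1:ℝ) ≤ R ^ k := one_le_pow₀ hR.le
    have hRkz : z₀V ≤ R ^ k := le_trans hRz₀V (le_self_pow₀ hR.le (by omega))
    have hlow := hVl _ hRkz
    have hup := hVu (R ^ (k+1)) (one_le_pow₀ hR.le)
    have hsplit : (R ^ (k+1) : ℝ) ^ (-θ) = (R ^ k) ^ (-θ) * R ^ (-θ) := by
      rw [pow_succ, Real.mul_rpow (by positivity) hR0.le]
    have hRkθ : (0:ℝ) < (R ^ k) ^ (-θ) := Real.rpow_pos_of_pos (by positivity) _
    have : tl V (R ^ (k+1)) ≤ c_V / 2 * (R ^ k) ^ (-θ) := by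
      calc tl V (R ^ (k+1)) ≤ C_V * ((R ^ (k+1) : ℝ)) ^ (-θ) := hup
      _ = (C_V * R ^ (-θ)) * (R ^ k) ^ (-θ) := by rw [hsplit]; ring
      _ ≤ c_V / 2 * (R ^ k) ^ (-θ) := mul_le_mul_of_nonneg_right hCVR hRkθ.le
    have h2' : c_V * (R ^ k) ^ (-θ) ≤ tl V (R ^ k) := hlow
    linarith
  -- choose threshold
  refine ⟨c_U * c_V / (2 ^ (a + 3) * L), max (z₀U ^ 2) (Real.exp (8 * L + 1)), by positivity,
    le_max_of_le_left (by nlinarith), ?_⟩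
  intro z hzge
  have hz₀U2 : z₀U ^ 2 ≤ z := le_trans (le_max_left _ _) hzge
  have hzexp : Real.exp (8 * L + 1) ≤ z := le_trans (le_max_right _ _) hzge
  have hzz : (1:ℝ) ≤ z := by nlinarith
  have hz0 : (0:ℝ) < z := lt_of_lt_of_le one_pos hzz
  have hlz : 0 ≤ Real.log z := Real.log_nonneg hzz
  have hlzbig : 8 * L + 1 ≤ Real.log z := by
    have := Real.log_le_log (Real.exp_pos _) hzexp
    rwa [Real.log_exp] at this
  have hP : (0:ℝ) < z ^ (-θ) := Real.rpow_pos_of_pos hz0 _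
  set s : ℝ := Real.sqrt z with hsdef
  have hs0 : 0 < s := Real.sqrt_pos.2 hz0
  have hs1 : (1:ℝ) ≤ s := by
    rw [hsdef, show (1:ℝ) = Real.sqrt 1 by simp]
    exact Real.sqrt_le_sqrt hzz
  have hsz₀U : z₀U ≤ s := by
    rw [hsdef, show z₀U = Real.sqrt (z₀U ^ 2) by rw [Real.sqrt_sq (by linarith)]]
    exact Real.sqrt_le_sqrt hz₀U2
  have hsR : R ≤ s := by
    have hzR2 : R ^ 2 ≤ z := by
      have : Real.exp (2 * L) ≤ Real.exp (8 * L + 1) := by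
        apply Real.exp_le_exp.2; nlinarith
      have he : Real.exp (2 * L) = R ^ 2 := by
        rw [hLdef, two_mul, Real.exp_add, Real.exp_log hR0, sq]
      linarith
    rw [hsdef, show R = Real.sqrt (R ^ 2) by rw [Real.sqrt_sq hR0.le]]
    exact Real.sqrt_le_sqrt hzR2
  have hlogs : Real.log s = Real.log z / 2 := Real.log_sqrt hz0.le
  obtain ⟨K, hK1, hK2⟩ := exists_K hR hs1
  have hKge1 : 1 ≤ K := by
    by_contra h
    push_neg at h
    interval_cases K
    · simp at hK2
      have : R ≤ s := hsR
      nlinarith [pow_pos hR0 1]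
  have hdec := lower_decomp hU hV hind hR hz0 1 K
  set b : ℝ := c_U * (c_V / 2) * z ^ (-θ) * ((1 + Real.log z) / 2) ^ a with hbdef
  have hb0 : 0 ≤ b := by positivity
  have hterm : ∀ k ∈ Finset.Ico 1 K,
      b ≤ tl U (z / R ^ k) * (tl V (R ^ k) - tl V (R ^ (k + 1))) := by
    intro k hk
    obtain ⟨hk1, hkK⟩ := Finset.mem_Ico.1 hk
    have hRks : (R:ℝ) ^ k ≤ s := le_trans (pow_le_pow_right₀ hR.le hkK.le) hK1
    have hRk0 : (0:ℝ) < R ^ k := by positivity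
    have hzs : s ≤ z / R ^ k := by
      have h1' : z / s ≤ z / R ^ k := div_le_div_of_nonneg_left hz0.le hRk0 hRks
      have h2' : z / s = s := Real.div_sqrt
      linarith
    have hz₀Uk : z₀U ≤ z / R ^ k := le_trans hsz₀U hzs
    have hUb := h1 _ hz₀Uk
    have hzk0 : (0:ℝ) < z / R ^ k := div_pos hz0 hRk0
    have hlogk : (1 + Real.log z) / 2 ≤ 1 + Real.log (z / R ^ k) := by
      have := Real.log_le_log hs0 hzs
      rw [hlogs] at this
      linarith
    have hlogkpow : ((1 + Real.log z) / 2) ^ a ≤ (1 + Real.log (z / R ^ k)) ^ a :=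
      pow_le_pow_left₀ (by linarith) hlogk a
    have hprod : (z / R ^ k) ^ (-θ) * (R ^ k) ^ (-θ) = z ^ (-θ) := by
      rw [← Real.mul_rpow (by positivity) (by positivity), div_mul_cancel₀ _ (ne_of_gt hRk0)]
    have key : b ≤ (c_U * (z / R ^ k) ^ (-θ) * (1 + Real.log (z / R ^ k)) ^ a) *
        (c_V / 2 * (R ^ k) ^ (-θ)) := by
      rw [hbdef]
      calc c_U * (c_V / 2) * z ^ (-θ) * ((1 + Real.log z) / 2) ^ a
          ≤ c_U * (c_V / 2) * z ^ (-θ) * (1 + Real.log (z / R ^ k)) ^ a := by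
            apply mul_le_mul_of_nonneg_left hlogkpow (by positivity)
      _ = (c_U * (z / R ^ k) ^ (-θ) * (1 + Real.log (z / R ^ k)) ^ a) *
            (c_V / 2 * (R ^ k) ^ (-θ)) := by
            rw [show c_U * (z / R ^ k) ^ (-θ) * (1 + Real.log (z / R ^ k)) ^ a *
              (c_V / 2 * (R ^ k) ^ (-θ)) = c_U * (c_V / 2) *
              ((z / R ^ k) ^ (-θ) * (R ^ k) ^ (-θ)) * (1 + Real.log (z / R ^ k)) ^ a by ring,
              hprod]
    refine le_trans key ?_
    apply mul_le_mul hUb (hslab k hk1) (by positivity) (tl_nonneg _ _)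
  have hsum : ((K - 1 : ℕ) : ℝ) * b ≤
      ∑ k ∈ Finset.Ico 1 K, tl U (z / R ^ k) * (tl V (R ^ k) - tl V (R ^ (k + 1))) := by
    have := Finset.card_nsmul_le_sum (Finset.Ico 1 K) _ b hterm
    rwa [Nat.card_Ico, nsmul_eq_mul] at this
  have hKcast : ((K - 1 : ℕ) : ℝ) = (K : ℝ) - 1 := by
    rw [Nat.cast_sub hKge1, Nat.cast_one]
  have hKlb : (1 + Real.log z) / (4 * L) ≤ ((K - 1 : ℕ) : ℝ) := by
    rw [hKcast]
    have hslog : Real.log s < (K + 1 : ℝ) * L := by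
      have := Real.log_lt_log hs0 hK2
      rwa [Real.log_pow, Nat.cast_add, Nat.cast_one] at this
    rw [hlogs] at hslog
    rw [div_le_iff₀ (by positivity)]
    nlinarith
  refine le_trans ?_ hdec
  refine le_trans ?_ hsum
  calc c_U * c_V / (2 ^ (a + 3) * L) * z ^ (-θ) * (1 + Real.log z) ^ (a + 1)
      = ((1 + Real.log z) / (4 * L)) * b := by
        rw [hbdef, div_pow, pow_succ]
        field_simp
        ring
  _ ≤ ((K - 1 : ℕ) : ℝ) * b := mul_le_mul_of_nonneg_right hKlb hb0
end analytic4



section assembly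
variable {Ω : Type*} [MeasureSpace Ω] [IsProbabilityMeasure (ℙ : Measure Ω)]

def Good (W : Ω → ℝ) (θ : ℝ) (a : ℕ) : Prop :=
  (∃ C, 0 < C ∧ UTail W θ a C) ∧ (∃ c z₁, 0 < c ∧ 1 ≤ z₁ ∧ LTail W θ a c z₁)

lemma upper_extend {W : Ω → ℝ} {θ κ₂ z₀ : ℝ} (hθ : 0 < θ) (hz₀ : 0 < z₀) (hκ : 0 < κ₂)
    (h : ∀ z, z₀ ≤ z → tl W z ≤ κ₂ * z ^ (-θ)) :
    ∃ C, 0 < C ∧ ∀ z, 1 ≤ z → tl W z ≤ C * z ^ (-θ) := by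
  refine ⟨max κ₂ ((max z₀ 1) ^ θ), lt_of_lt_of_le hκ (le_max_left _ _), ?_⟩
  intro z hz
  have hz0 : (0:ℝ) < z := lt_of_lt_of_le one_pos hz
  by_cases hc : max z₀ 1 ≤ z
  · have hb := h z (le_trans (le_max_left _ _) hc)
    refine le_trans hb (mul_le_mul_of_nonneg_right (le_max_left _ _) (by positivity))
  · push_neg at hc
    have hm1 : (1:ℝ) ≤ max z₀ 1 := le_max_right _ _
    have hone : ((max z₀ 1):ℝ) ^ θ * (max z₀ 1) ^ (-θ) = 1 := by
      rw [← Real.rpow_add (by linarith)]; simp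
    have hmono : ((max z₀ 1):ℝ) ^ (-θ) ≤ z ^ (-θ) :=
      rpow_le_rpow_of_nonpos hz0 hc.le (neg_nonpos.2 hθ.le)
    calc tl W z ≤ 1 := tl_le_one _ _
    _ = (max z₀ 1) ^ θ * (max z₀ 1) ^ (-θ) := hone.symm
    _ ≤ (max z₀ 1) ^ θ * z ^ (-θ) := by
        apply mul_le_mul_of_nonneg_left hmono (by positivity)
    _ ≤ max κ₂ ((max z₀ 1) ^ θ) * z ^ (-θ) := by
        apply mul_le_mul_of_nonneg_right (le_max_right _ _) (by positivity)

lemma good_step_same {U V : Ω → ℝ} (hU : Measurable U) (hV : Measurable V)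
    (hUpos : ∀ᵐ ω ∂(ℙ : Measure Ω), 0 < U ω) (hVpos : ∀ᵐ ω ∂(ℙ : Measure Ω), 0 < V ω)
    (hind : IndepFun U V ℙ) {θ : ℝ} (hθ : 0 < θ) {a : ℕ}
    (hG : Good U θ a)
    (hVu : ∃ C, 0 < C ∧ ∀ z, 1 ≤ z → tl V z ≤ C * z ^ (-θ))
    (hVl : ∃ c z₀, 0 < c ∧ 1 ≤ z₀ ∧ ∀ z, z₀ ≤ z → c * z ^ (-θ) ≤ tl V z) :
    Good (fun ω => U ω * V ω) θ (a + 1) := by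
  obtain ⟨⟨C_U, hCU, hUu⟩, ⟨c_U, z₀U, hcU, hz₀U, hUl⟩⟩ := hG
  obtain ⟨C_V, hCV, hVu⟩ := hVu
  obtain ⟨c_V, z₀V, hcV, hz₀V, hVl⟩ := hVl
  constructor
  · refine ⟨C_U + C_V * 2 ^ θ + C_U * C_V * 2 ^ θ / Real.log 2, ?_, ?_⟩
    · have h2θ : (0:ℝ) < (2:ℝ) ^ θ := Real.rpow_pos_of_pos (by norm_num) _
      have hlog2 : (0:ℝ) < Real.log 2 := Real.log_pos (by norm_num)
      positivity
    · exact upper_step_same hU hV hUpos hVpos hind hθ hCU hCV hUu hVu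
  · exact lower_step_same hU hV hind hθ hcU hz₀U hcV hz₀V hCV hUl hVl hVu

lemma good_step_dom {U V : Ω → ℝ} (hU : Measurable U) (hV : Measurable V)
    (hUpos : ∀ᵐ ω ∂(ℙ : Measure Ω), 0 < U ω) (hVpos : ∀ᵐ ω ∂(ℙ : Measure Ω), 0 < V ω)
    (hind : IndepFun U V ℙ) {θ θ' : ℝ} (hθ : 0 < θ) (hθ' : θ < θ') {a : ℕ}
    (hG : Good U θ a)
    (hVu : ∃ C, 0 < C ∧ ∀ z, 1 ≤ z → tl V z ≤ C * z ^ (-θ'))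
    (hVδ : ∃ ε δ : ℝ, 1 ≤ ε ∧ 0 < δ ∧ δ ≤ tl V ε) :
    Good (fun ω => U ω * V ω) θ a := by
  obtain ⟨⟨C_U, hCU, hUu⟩, ⟨c_U, z₀U, hcU, hz₀U, hUl⟩⟩ := hG
  obtain ⟨C_V, hCV, hVu⟩ := hVu
  obtain ⟨ε, δ, hε, hδ, hVδ⟩ := hVδ
  constructor
  · refine ⟨C_U + C_V * 2 ^ θ + C_U * C_V * 2 ^ θ * (1 - 2 ^ (θ - θ'))⁻¹, ?_, ?_⟩
    · have h2θ : (0:ℝ) < (2:ℝ) ^ θ := Real.rpow_pos_of_pos (by norm_num) _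
      have hr1 : (2:ℝ) ^ (θ - θ') < 1 :=
        Real.rpow_lt_one_of_one_lt_of_neg (by norm_num) (by linarith)
      have : (0:ℝ) < (1 - 2 ^ (θ - θ'))⁻¹ := by
        apply inv_pos.2; linarith
      positivity
    · exact upper_step_dom hU hV hUpos hVpos hind hθ hθ' hCU hCV hUu hVu
  · refine ⟨c_U * δ / 2 ^ a, max (ε * z₀U) (Real.exp (2 * Real.log ε + 1)), by positivity, ?_, ?_⟩
    · apply le_max_of_le_left; nlinarith
    · exact lower_step_dom hind hθ hcU hz₀U hε hδ hUl hVδ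
end assembly

/-- `AsympAtTop f g` : there exist constants `0 < κ₁ ≤ κ₂ < ∞` and `z₀ > 0` such that
`κ₁ f(z) ≤ g(z) ≤ κ₂ f(z)` for all `z ≥ z₀`. -/
def AsympAtTop (f g : ℝ → ℝ) : Prop :=
  ∃ κ₁ κ₂ z₀ : ℝ, 0 < κ₁ ∧ κ₁ ≤ κ₂ ∧ 0 < z₀ ∧
    ∀ z, z₀ ≤ z → κ₁ * f z ≤ g z ∧ g z ≤ κ₂ * f z

theorem stmt_3 {Ω : Type*} [MeasureSpace Ω] [IsProbabilityMeasure (ℙ : Measure Ω)]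
    (θ θbar : ℝ) (hθ : 0 < θ) (hθθ : θ < θbar) (p q : ℕ) (hp : 1 ≤ p)
    (X : Fin p → Ω → ℝ) (Y : Fin q → Ω → ℝ)
    (hXm : ∀ i, Measurable (X i)) (hYm : ∀ j, Measurable (Y j))
    (hXpos : ∀ i, ∀ᵐ ω ∂ℙ, 0 < X i ω) (hYpos : ∀ j, ∀ᵐ ω ∂ℙ, 0 < Y j ω)
    (hindep : iIndepFun (Sum.elim X Y) ℙ)
    (htX : ∀ i, AsympAtTop (fun z => z ^ (-θ))
      (fun z => (ℙ {ω | z ≤ X i ω}).toReal))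
    (htY : ∀ j, AsympAtTop (fun z => z ^ (-θbar))
      (fun z => (ℙ {ω | z ≤ Y j ω}).toReal)) :
    AsympAtTop (fun z => z ^ (-θ) * Real.log z ^ (p - 1))
      (fun z => (ℙ {ω | z ≤ (∏ i, X i ω) * ∏ j, Y j ω}).toReal) := by
  set f : Fin p ⊕ Fin q → Ω → ℝ := Sum.elim X Y with hf
  have hfm : ∀ x, Measurable (f x) := by rintro (i | j); exacts [hXm i, hYm j]
  have hfpos : ∀ x, ∀ᵐ ω ∂(ℙ : Measure Ω), 0 < f x ω := by
    rintro (i | j); exacts [hXpos i, hYpos j]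
  have hprodpos : ∀ s : Finset (Fin p ⊕ Fin q), ∀ᵐ ω ∂(ℙ : Measure Ω), 0 < ∏ x ∈ s, f x ω := by
    intro s
    filter_upwards [ae_all_iff.2 hfpos] with ω hω
    exact Finset.prod_pos fun x _ => hω x
  have hprodmeas : ∀ s : Finset (Fin p ⊕ Fin q), Measurable (fun ω => ∏ x ∈ s, f x ω) :=
    fun s => Finset.measurable_prod _ fun x _ => hfm x
  have hprodind : ∀ (s : Finset (Fin p ⊕ Fin q)) (i : Fin p ⊕ Fin q), i ∉ s →
      IndepFun (fun ω => ∏ x ∈ s, f x ω) (f i) ℙ := by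
    intro s i hi
    have := hindep.indepFun_finsetProd_of_notMem hfm hi
    have heq : (∏ x ∈ s, f x) = fun ω => ∏ x ∈ s, f x ω := by
      funext ω; exact Finset.prod_apply ω s f
    rwa [heq] at this
  -- tail bounds for individual factors
  have hXu : ∀ i, ∃ C, 0 < C ∧ ∀ z, 1 ≤ z → tl (X i) z ≤ C * z ^ (-θ) := by
    intro i
    obtain ⟨κ₁, κ₂, z₀, hκ₁, hκ₁₂, hz₀, hb⟩ := htX i
    exact upper_extend hθ hz₀ (lt_of_lt_of_le hκ₁ hκ₁₂) (fun z hz => (hb z hz).2)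
  have hXl : ∀ i, ∃ c z₀', 0 < c ∧ 1 ≤ z₀' ∧ ∀ z, z₀' ≤ z → c * z ^ (-θ) ≤ tl (X i) z := by
    intro i
    obtain ⟨κ₁, κ₂, z₀, hκ₁, hκ₁₂, hz₀, hb⟩ := htX i
    exact ⟨κ₁, max z₀ 1, hκ₁, le_max_right _ _,
      fun z hz => (hb z (le_trans (le_max_left _ _) hz)).1⟩
  have hYu : ∀ j, ∃ C, 0 < C ∧ ∀ z, 1 ≤ z → tl (Y j) z ≤ C * z ^ (-θbar) := by
    intro j
    obtain ⟨κ₁, κ₂, z₀, hκ₁, hκ₁₂, hz₀, hb⟩ := htY j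
    exact upper_extend (lt_trans hθ hθθ) hz₀ (lt_of_lt_of_le hκ₁ hκ₁₂)
      (fun z hz => (hb z hz).2)
  have hYδ : ∀ j, ∃ ε δ : ℝ, 1 ≤ ε ∧ 0 < δ ∧ δ ≤ tl (Y j) ε := by
    intro j
    obtain ⟨κ₁, κ₂, z₀, hκ₁, hκ₁₂, hz₀, hb⟩ := htY j
    refine ⟨max z₀ 1, κ₁ * (max z₀ 1) ^ (-θbar), le_max_right _ _, ?_, ?_⟩
    · have : (0:ℝ) < (max z₀ 1) ^ (-θbar) := Real.rpow_pos_of_pos (by positivity) _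
      positivity
    · exact (hb _ (le_max_left _ _)).1
  -- the finsets
  set sA : ℕ → Finset (Fin p ⊕ Fin q) :=
    fun m => (Finset.univ.filter fun i : Fin p => (i : ℕ) < m).image Sum.inl with hsA
  set tB : ℕ → Finset (Fin p ⊕ Fin q) :=
    fun r => sA p ∪ (Finset.univ.filter fun j : Fin q => (j : ℕ) < r).image Sum.inr with htB
  have hsA_succ : ∀ m (hm : m < p), sA (m + 1) = insert (Sum.inl ⟨m, hm⟩) (sA m) := by
    intro m hm
    ext x
    rcases x with i | j
    · simp only [hsA, Finset.mem_image, Finset.mem_filter, Finset.mem_univ, true_and,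
        Finset.mem_insert]
      constructor
      · rintro ⟨i', hi', h⟩
        rcases Nat.lt_succ_iff_lt_or_eq.1 hi' with h2 | h2
        · exact Or.inr ⟨i', h2, h⟩
        · left; rw [← h]; congr 1; exact Fin.ext h2
      · rintro (h | ⟨i', hi', h⟩)
        · obtain rfl : (⟨m, hm⟩ : Fin p) = i := Sum.inl.inj h.symm
          exact ⟨⟨m, hm⟩, Nat.lt_succ_self m, rfl⟩
        · obtain rfl : i' = i := Sum.inl.inj h
          exact ⟨i', Nat.lt_succ_of_lt hi', rfl⟩
    · simp [hsA]
  have hsA_not : ∀ m (hm : m < p), Sum.inl (⟨m, hm⟩ : Fin p) ∉ sA m := by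
    intro m hm h
    simp only [hsA, Finset.mem_image, Finset.mem_filter, Finset.mem_univ, true_and] at h
    obtain ⟨i', hi', h⟩ := h
    obtain rfl : i' = ⟨m, hm⟩ := Sum.inl.inj h
    simp at hi'
  have htB_succ : ∀ r (hr : r < q), tB (r + 1) = insert (Sum.inr ⟨r, hr⟩) (tB r) := by
    intro r hr
    ext x
    rcases x with i | j
    · simp [htB, hsA]
    · simp only [htB, Finset.mem_union, Finset.mem_image, Finset.mem_filter, Finset.mem_univ,
        true_and, Finset.mem_insert, hsA]
      constructor
      · rintro (⟨i', h⟩ | ⟨j', hj', h⟩)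
        · exact absurd h (by simp)
        obtain rfl : j' = j := Sum.inr.inj h
        · rcases Nat.lt_succ_iff_lt_or_eq.1 hj' with h2 | h2
          · exact Or.inr (Or.inr ⟨j', h2, rfl⟩)
          · left; congr 1; exact Fin.ext h2
      · rintro (h | h | ⟨j', hj', h⟩)
        · obtain rfl : (⟨r, hr⟩ : Fin q) = j := Sum.inr.inj h.symm
          exact Or.inr ⟨⟨r, hr⟩, Nat.lt_succ_self r, rfl⟩
        · exact absurd h (by simp)
        · obtain rfl : j' = j := Sum.inr.inj h
          exact Or.inr ⟨j', Nat.lt_succ_of_lt hj', rfl⟩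
  have htB_not : ∀ r (hr : r < q), Sum.inr (⟨r, hr⟩ : Fin q) ∉ tB r := by
    intro r hr h
    simp only [htB, hsA, Finset.mem_union, Finset.mem_image, Finset.mem_filter,
      Finset.mem_univ, true_and] at h
    rcases h with ⟨i', _, h⟩ | ⟨j', hj', h⟩
    · exact absurd h (by simp)
    · obtain rfl : j' = ⟨r, hr⟩ := Sum.inr.inj h
      simp at hj'
  have htB0 : tB 0 = sA p := by
    simp [htB]
  have htBq : tB q = Finset.univ := by
    ext x
    rcases x with i | j
    · simp [htB, hsA, i.isLt]
    · simp [htB, hsA, j.isLt]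
  -- claim 1 : products of X's
  have claim1 : ∀ m : ℕ, ∀ hm : m < p, Good (fun ω => ∏ x ∈ sA (m + 1), f x ω) θ m := by
    intro m
    induction m with
    | zero =>
      intro hm
      have hone : sA 1 = {Sum.inl (⟨0, hm⟩ : Fin p)} := by
        rw [hsA_succ 0 hm]
        have : sA 0 = ∅ := by simp [hsA]
        rw [this, LawfulSingleton.insert_empty_eq]
      have hfun : (fun ω => ∏ x ∈ sA 1, f x ω) = X ⟨0, hm⟩ := by
        funext ω; rw [hone, Finset.prod_singleton]; rfl
      rw [hfun]
      obtain ⟨C, hC, hu⟩ := hXu ⟨0, hm⟩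
      obtain ⟨c, z₀', hc, hz₀', hl⟩ := hXl ⟨0, hm⟩
      constructor
      · exact ⟨C, hC, fun z hz => by simpa using hu z hz⟩
      · exact ⟨c, z₀', hc, hz₀', fun z hz => by simpa using hl z hz⟩
    | succ m ih =>
      intro hm
      have hm' : m < p := lt_trans (Nat.lt_succ_self m) hm
      have hG := ih hm'
      set i : Fin p ⊕ Fin q := Sum.inl ⟨m + 1, hm⟩ with hi
      have hins : sA (m + 2) = insert i (sA (m + 1)) := hsA_succ (m + 1) hm
      have hnot : i ∉ sA (m + 1) := hsA_not (m + 1) hm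
      have hfun : (fun ω => ∏ x ∈ sA (m + 2), f x ω) =
          fun ω => (∏ x ∈ sA (m + 1), f x ω) * f i ω := by
        funext ω; rw [hins, Finset.prod_insert hnot, mul_comm]
      rw [hfun]
      exact good_step_same (hprodmeas _) (hfm i) (hprodpos _) (hfpos i)
        (hprodind _ i hnot) hθ hG (hXu ⟨m + 1, hm⟩) (hXl ⟨m + 1, hm⟩)
  -- claim 2 : multiply in the Y's
  have claim2 : ∀ r : ℕ, r ≤ q → Good (fun ω => ∏ x ∈ tB r, f x ω) θ (p - 1) := by
    intro r
    induction r with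
    | zero =>
      intro _
      have := claim1 (p - 1) (by omega)
      have hpp : p - 1 + 1 = p := by omega
      rw [hpp] at this
      rw [htB0]
      exact this
    | succ r ih =>
      intro hr
      have hr' : r < q := hr
      have hG := ih (le_of_lt hr')
      set j : Fin p ⊕ Fin q := Sum.inr ⟨r, hr'⟩ with hj
      have hins : tB (r + 1) = insert j (tB r) := htB_succ r hr'
      have hnot : j ∉ tB r := htB_not r hr'
      have hfun : (fun ω => ∏ x ∈ tB (r + 1), f x ω) =
          fun ω => (∏ x ∈ tB r, f x ω) * f j ω := by
        funext ω; rw [hins, Finset.prod_insert hnot, mul_comm]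
      rw [hfun]
      exact good_step_dom (hprodmeas _) (hfm j) (hprodpos _) (hfpos j)
        (hprodind _ j hnot) hθ hθθ hG (hYu ⟨r, hr'⟩) (hYδ ⟨r, hr'⟩)
  have hGfin : Good (fun ω => ∏ x ∈ tB q, f x ω) θ (p - 1) := claim2 q le_rfl
  -- identify the product
  have hprodeq : (fun ω => (∏ i, X i ω) * ∏ j, Y j ω) = fun ω => ∏ x ∈ tB q, f x ω := by
    funext ω
    rw [htBq]
    rw [show ∏ x ∈ Finset.univ, f x ω = ∏ x : Fin p ⊕ Fin q, f x ω from rfl]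
    rw [Fintype.prod_sum_type (fun x => f x ω)]
    rfl
  obtain ⟨⟨C, hC, hu⟩, ⟨c, z₁, hc, hz₁, hl⟩⟩ := hGfin
  -- final packaging
  refine ⟨c, max (C * 2 ^ (p - 1)) c, max z₁ (Real.exp 1), hc, le_max_right _ _,
    lt_of_lt_of_le one_pos (le_trans hz₁ (le_max_left _ _)), ?_⟩
  intro z hz
  have hzz₁ : z₁ ≤ z := le_trans (le_max_left _ _) hz
  have hze : Real.exp 1 ≤ z := le_trans (le_max_right _ _) hz
  have hz1 : (1:ℝ) ≤ z := le_trans (by nlinarith [Real.exp_one_gt_d9]) hze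
  have hz0 : (0:ℝ) < z := lt_of_lt_of_le one_pos hz1
  have hlog1 : (1:ℝ) ≤ Real.log z := by
    calc (1:ℝ) = Real.log (Real.exp 1) := (Real.log_exp 1).symm
    _ ≤ Real.log z := Real.log_le_log (Real.exp_pos 1) hze
  have hP : (0:ℝ) < z ^ (-θ) := Real.rpow_pos_of_pos hz0 _
  have hsetEq : {ω | z ≤ (∏ i, X i ω) * ∏ j, Y j ω} = {ω | z ≤ ∏ x ∈ tB q, f x ω} := by
    ext ω
    simp only [Set.mem_setOf_eq]
    rw [show (∏ i, X i ω) * ∏ j, Y j ω = ∏ x ∈ tB q, f x ω from congrFun hprodeq ω]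
  have htl : (ℙ {ω | z ≤ (∏ i, X i ω) * ∏ j, Y j ω}).toReal = tl (fun ω => ∏ x ∈ tB q, f x ω) z := by
    rw [hsetEq]; rfl
  simp only [htl]
  have hup := hu z hz1
  have hlo := hl z hzz₁
  have hcmp1 : Real.log z ^ (p - 1) ≤ (1 + Real.log z) ^ (p - 1) :=
    pow_le_pow_left₀ (by linarith) (by linarith) _
  have hcmp2 : (1 + Real.log z) ^ (p - 1) ≤ 2 ^ (p - 1) * Real.log z ^ (p - 1) := by
    rw [← mul_pow]
    exact pow_le_pow_left₀ (by linarith) (by linarith) _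
  constructor
  · have step1 : c * (z ^ (-θ) * Real.log z ^ (p - 1)) ≤
        c * z ^ (-θ) * (1 + Real.log z) ^ (p - 1) := by
      rw [← mul_assoc]
      exact mul_le_mul_of_nonneg_left hcmp1 (by positivity)
    exact le_trans step1 hlo
  · have step2 : C * z ^ (-θ) * (1 + Real.log z) ^ (p - 1) ≤
        C * z ^ (-θ) * (2 ^ (p - 1) * Real.log z ^ (p - 1)) :=
      mul_le_mul_of_nonneg_left hcmp2 (by positivity)
    have step3 : C * z ^ (-θ) * (2 ^ (p - 1) * Real.log z ^ (p - 1)) =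
        (C * 2 ^ (p - 1)) * (z ^ (-θ) * Real.log z ^ (p - 1)) := by ring
    have step4 : (C * 2 ^ (p - 1)) * (z ^ (-θ) * Real.log z ^ (p - 1)) ≤
        max (C * 2 ^ (p - 1)) c * (z ^ (-θ) * Real.log z ^ (p - 1)) := by
      apply mul_le_mul_of_nonneg_right (le_max_left _ _)
      have hlogp : (0:ℝ) ≤ Real.log z ^ (p-1) := by positivity
      positivity
    linarith [hup]
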